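/- Let G be a finite group acting k-linearly on a vector space V over a field of characteristic 0, and let g, h ∈ G. If the fixed subspaces satisfy ((1-g)V) ∩ ((1-h)V) = 0, then codim V^{gh} = codim V^g + codim V^h, i.e., dim((1-gh)V) = dim((1-g)V) + dim((1-h)V). -/

import Mathlib

/-- If (1-g)V ∩ (1-h)V = 0 then
dim (1-gh)V = dim (1-g)V + dim (1-h)V, i.e. codim V^{gh} = codim V^g + codim V^h. -/
theorem stmt_19 {k : Type*} [Field k] [CharZero k] {G : Type*} [Group G] [Finite G]
    {V : Type*} [AddCommGroup V] [Module k V] [FiniteDimensional k V]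
    (ρ : Representation k G V) (g h : G)
    (hdisj : LinearMap.range (1 - ρ g) ⊓ LinearMap.range (1 - ρ h) = ⊥) :
    Module.finrank k (LinearMap.range (1 - ρ (g * h)))
      = Module.finrank k (LinearMap.range (1 - ρ g))
        + Module.finrank k (LinearMap.range (1 - ρ h)) := by
  classical
  -- key algebraic identity
  have key : ∀ x : V, (1 - ρ (g * h)) x = (1 - ρ h) x + (1 - ρ g) (ρ h x) := by
    intro x
    simp only [LinearMap.sub_apply, Module.End.one_apply, map_mul, Module.End.mul_apply]
    abel
  -- Step A : kernel of 1 - ρ(gh) is the intersection of the kernels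
  have hker : LinearMap.ker (1 - ρ (g * h))
      = LinearMap.ker (1 - ρ g) ⊓ LinearMap.ker (1 - ρ h) := by
    ext x
    simp only [LinearMap.mem_ker, Submodule.mem_inf]
    constructor
    · intro hx
      have h0 : (1 - ρ h) x + (1 - ρ g) (ρ h x) = 0 := by rw [← key]; exact hx
      have h1 : (1 - ρ h) x = (1 - ρ g) (-(ρ h x)) := by
        rw [map_neg]; exact eq_neg_of_add_eq_zero_left h0
      have hmem : (1 - ρ h) x ∈
          LinearMap.range (1 - ρ g) ⊓ LinearMap.range (1 - ρ h) :=
        ⟨⟨-(ρ h x), h1.symm⟩, ⟨x, rfl⟩⟩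
      rw [hdisj, Submodule.mem_bot] at hmem
      have hhx : (1 - ρ h) x = 0 := hmem
      have hx' : ρ h x = x := by
        have := hhx
        simp only [LinearMap.sub_apply, Module.End.one_apply, sub_eq_zero] at this
        exact this.symm
      constructor
      · have h2 : (1 - ρ g) (ρ h x) = 0 := by
          have := h0; rw [hhx, zero_add] at this; exact this
        rw [hx'] at h2; exact h2
      · exact hhx
    · rintro ⟨hg, hh⟩
      rw [key, hh, zero_add]
      have hx' : ρ h x = x := by
        have := hh
        simp only [LinearMap.sub_apply, Module.End.one_apply, sub_eq_zero] at this
        exact this.symm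
      rw [hx']; exact hg
  -- Step C : range of 1 - ρ(gh) is contained in the sup
  have hsub : LinearMap.range (1 - ρ (g * h))
      ≤ LinearMap.range (1 - ρ g) ⊔ LinearMap.range (1 - ρ h) := by
    rintro _ ⟨x, rfl⟩
    rw [key]
    exact Submodule.add_mem _ (Submodule.mem_sup_right ⟨x, rfl⟩)
      (Submodule.mem_sup_left ⟨ρ h x, rfl⟩)
  -- the subgroup generated by g and h
  set H : Subgroup G := Subgroup.closure {g, h} with hH
  letI : Fintype H := Fintype.ofFinite H
  haveI : Invertible (Fintype.card H : k) :=
    invertibleOfNonzero (by exact_mod_cast Nat.cast_ne_zero.mpr Fintype.card_ne_zero)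
  set ρ' : Representation k H V := ρ.comp H.subtype with hρ'
  set π : V →ₗ[k] V := Representation.averageMap ρ' with hπ
  have hgH : g ∈ H := Subgroup.subset_closure (by simp)
  have hhH : h ∈ H := Subgroup.subset_closure (by simp)
  -- π absorbs ρ t for t ∈ H
  have habs : ∀ t ∈ H, ∀ x : V, π (ρ t x) = π x := by
    intro t ht x
    have : ρ t = ρ' ⟨t, ht⟩ := rfl
    rw [this, ← Representation.asAlgebraHom_single_one ρ' ⟨t, ht⟩]
    rw [hπ]
    show (Representation.asAlgebraHom ρ' (GroupAlgebra.average k H) *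
      Representation.asAlgebraHom ρ' (MonoidAlgebra.single ⟨t, ht⟩ 1)) x = _
    rw [← map_mul, GroupAlgebra.mul_average_right]
    rfl
  -- ranges of 1 - ρg, 1 - ρh are in ker π
  have hWker : LinearMap.range (1 - ρ g) ⊔ LinearMap.range (1 - ρ h)
      ≤ LinearMap.ker π := by
    apply sup_le
    · rintro _ ⟨x, rfl⟩
      simp only [LinearMap.mem_ker, LinearMap.sub_apply, Module.End.one_apply, map_sub]
      rw [habs g hgH x, sub_self]
    · rintro _ ⟨x, rfl⟩
      simp only [LinearMap.mem_ker, LinearMap.sub_apply, Module.End.one_apply, map_sub]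
      rw [habs h hhH x, sub_self]
  -- fixed vectors of g and h are in range π
  have hfix : LinearMap.ker (1 - ρ g) ⊓ LinearMap.ker (1 - ρ h)
      ≤ LinearMap.range π := by
    intro x hx
    rw [Submodule.mem_inf] at hx
    obtain ⟨hg, hh⟩ := hx
    have hgx : ρ g x = x := by
      have := LinearMap.mem_ker.mp hg
      simp only [LinearMap.sub_apply, Module.End.one_apply, sub_eq_zero] at this
      exact this.symm
    have hhx : ρ h x = x := by
      have := LinearMap.mem_ker.mp hh
      simp only [LinearMap.sub_apply, Module.End.one_apply, sub_eq_zero] at this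
      exact this.symm
    have hinv : x ∈ Representation.invariants ρ' := by
      rintro ⟨t, ht⟩
      show ρ t x = x
      induction ht using Subgroup.closure_induction with
      | mem s hs => rcases hs with rfl | rfl; exacts [hgx, hhx]
      | one => simp
      | mul a b _ _ ha hb => rw [map_mul, Module.End.mul_apply, hb, ha]
      | inv a _ ha =>
          have h2 : ρ a⁻¹ (ρ a x) = x := by
            rw [← Module.End.mul_apply, ← map_mul, inv_mul_cancel, map_one,
              Module.End.one_apply]
          rw [ha] at h2; exact h2
    exact ⟨x, Representation.averageMap_id ρ' x hinv⟩
  -- dimension bookkeeping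
  have rn1 := LinearMap.finrank_range_add_finrank_ker (1 - ρ (g * h))
  have rn2 := LinearMap.finrank_range_add_finrank_ker π
  have hsupdim : Module.finrank k
        ↥(LinearMap.range (1 - ρ g) ⊔ LinearMap.range (1 - ρ h))
      = Module.finrank k (LinearMap.range (1 - ρ g))
        + Module.finrank k (LinearMap.range (1 - ρ h)) := by
    have := Submodule.finrank_sup_add_finrank_inf_eq
      (LinearMap.range (1 - ρ g)) (LinearMap.range (1 - ρ h))
    rw [hdisj, finrank_bot] at this
    omega
  have h1 : Module.finrank k (LinearMap.range (1 - ρ (g * h)))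
      ≤ Module.finrank k (LinearMap.range (1 - ρ g))
        + Module.finrank k (LinearMap.range (1 - ρ h)) := by
    rw [← hsupdim]; exact Submodule.finrank_mono hsub
  have h2 : Module.finrank k (LinearMap.range (1 - ρ g))
        + Module.finrank k (LinearMap.range (1 - ρ h))
      ≤ Module.finrank k (LinearMap.ker π) := by
    rw [← hsupdim]; exact Submodule.finrank_mono hWker
  have h3 : Module.finrank k (LinearMap.ker (1 - ρ (g * h)))
      ≤ Module.finrank k (LinearMap.range π) := by
    rw [hker]; exact Submodule.finrank_mono hfix
  omega
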